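/- For every n ≥ 1 and t ∈ ℝ, the real-time partition function of the d = 1 Ising model satisfies: Σ_{J ∈ 𝔽₂ⁿ, ‖J‖ even} exp(−i·t·‖J‖) = 2^{n−1} · exp(−i·n·t/2) · ( (cos(t/2))ⁿ + (i·sin(t/2))ⁿ ), as an identity of complex numbers. (The set of even-weight vectors is the perpendicular complement of the constraint space {0, 𝟙} spanned by the all-ones vector; the two dual terms come from the trivial constraint and the constraint among all Ising bond terms.) -/

import Mathlib

open Finset

/-- Hamming weight of a binary vector. -/
def wt {n : ℕ} (v : Fin n → ZMod 2) : ℕ :=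
  (Finset.univ.filter (fun i => v i = 1)).card

def binEquiv (n : ℕ) : (Fin n → ZMod 2) ≃ Finset (Fin n) where
  toFun J := Finset.univ.filter (fun i => J i = 1)
  invFun s := fun i => if i ∈ s then 1 else 0
  left_inv J := by
    funext i
    rcases (show ∀ a : ZMod 2, a = 0 ∨ a = 1 by decide) (J i) with h | h <;> simp [h]
  right_inv s := by
    ext i
    by_cases h : i ∈ s <;> simp [h]

lemma sum_pow_wt {n : ℕ} (z : ℂ) :
    ∑ J : Fin n → ZMod 2, z ^ wt J = (1 + z) ^ n := by
  have h1 : ∑ J : Fin n → ZMod 2, z ^ wt J = ∑ s : Finset (Fin n), z ^ s.card :=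
    Fintype.sum_equiv (binEquiv n) _ _ (fun J => rfl)
  rw [h1]
  have h2 : (1 + z) ^ n = ∏ _i : Fin n, (z + 1) := by
    simp [Finset.prod_const, add_comm]
  rw [h2, Finset.prod_add]
  simp [Finset.powerset_univ]

/-- **Real-time partition function of the d = 1 Ising model**: summing
`e^{−it‖J‖}` over the even-weight vectors of `𝔽₂ⁿ` (the perpendicular complement of
the constraint space `{0, 𝟙}`) gives
`2^{n−1} e^{−int/2} ((cos(t/2))ⁿ + (i sin(t/2))ⁿ)`. -/
theorem ising_1d_real_time_partition_function {n : ℕ} (hn : 1 ≤ n) (t : ℝ) :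
    ∑ J ∈ Finset.univ.filter (fun J : Fin n → ZMod 2 => Even (wt J)),
        Complex.exp (-Complex.I * t * (wt J : ℂ))
      = 2 ^ (n - 1) * Complex.exp (-Complex.I * n * t / 2) *
          ((Real.cos (t / 2) : ℂ) ^ n + (Complex.I * (Real.sin (t / 2) : ℂ)) ^ n) := by
  set e : ℂ := Complex.exp (-Complex.I * t) with he
  set u : ℂ := Complex.exp (-Complex.I * t / 2) with hu
  have hsummand : ∀ J : Fin n → ZMod 2,
      Complex.exp (-Complex.I * t * (wt J : ℂ)) = e ^ wt J := by
    intro J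
    rw [he, ← Complex.exp_nat_mul]
    ring_nf
  -- key splitting identity
  have hsplit : 2 * ∑ J ∈ Finset.univ.filter (fun J : Fin n → ZMod 2 => Even (wt J)),
      e ^ wt J = (1 + e) ^ n + (1 - e) ^ n := by
    have hA := sum_pow_wt (n := n) e
    have hB := sum_pow_wt (n := n) (-e)
    have hB' : ∑ J : Fin n → ZMod 2, (-e) ^ wt J = (1 - e) ^ n := by
      rw [hB]; ring_nf
    have hsum : ∑ J : Fin n → ZMod 2, (e ^ wt J + (-e) ^ wt J)
        = (1 + e) ^ n + (1 - e) ^ n := by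
      rw [Finset.sum_add_distrib, hA, hB']
    rw [← hsum,
      ← Finset.sum_filter_add_sum_filter_not Finset.univ
        (fun J : Fin n → ZMod 2 => Even (wt J))]
    have h1 : ∑ J ∈ Finset.univ.filter (fun J : Fin n → ZMod 2 => Even (wt J)),
        (e ^ wt J + (-e) ^ wt J)
        = 2 * ∑ J ∈ Finset.univ.filter (fun J : Fin n → ZMod 2 => Even (wt J)),
            e ^ wt J := by
      rw [Finset.mul_sum]
      refine Finset.sum_congr rfl (fun J hJ => ?_)
      have hev : Even (wt J) := by simpa using hJ
      rw [hev.neg_pow]; ring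
    have h2 : ∑ J ∈ Finset.univ.filter (fun J : Fin n → ZMod 2 => ¬ Even (wt J)),
        (e ^ wt J + (-e) ^ wt J) = 0 := by
      refine Finset.sum_eq_zero (fun J hJ => ?_)
      have hodd : Odd (wt J) := by
        have := (Finset.mem_filter.mp hJ).2
        exact Nat.not_even_iff_odd.mp this
      rw [hodd.neg_pow]; ring
    rw [h1, h2, add_zero]
  have hplus : 1 + e = 2 * u * (Real.cos (t / 2) : ℂ) := by
    have h1 : (1 : ℂ) = u * Complex.exp (Complex.I * t / 2) := by
      rw [hu, ← Complex.exp_add]; ring_nf; simp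
    have h2 : e = u * Complex.exp (-(Complex.I * t / 2)) := by
      rw [he, hu, ← Complex.exp_add]; ring_nf
    rw [h1, h2, Complex.ofReal_cos]
    have : Complex.I * ↑t / 2 = (↑t / 2 : ℂ) * Complex.I := by ring
    rw [this, Complex.exp_mul_I, ← neg_mul, Complex.exp_mul_I, Complex.cos_neg,
      Complex.sin_neg]
    push_cast
    ring
  have hminus : 1 - e = 2 * u * (Complex.I * (Real.sin (t / 2) : ℂ)) := by
    have h1 : (1 : ℂ) = u * Complex.exp (Complex.I * t / 2) := by
      rw [hu, ← Complex.exp_add]; ring_nf; simp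
    have h2 : e = u * Complex.exp (-(Complex.I * t / 2)) := by
      rw [he, hu, ← Complex.exp_add]; ring_nf
    rw [h1, h2, Complex.ofReal_sin]
    have : Complex.I * ↑t / 2 = (↑t / 2 : ℂ) * Complex.I := by ring
    rw [this, Complex.exp_mul_I, ← neg_mul, Complex.exp_mul_I, Complex.cos_neg,
      Complex.sin_neg]
    push_cast
    ring
  have hun : u ^ n = Complex.exp (-Complex.I * n * t / 2) := by
    rw [hu, ← Complex.exp_nat_mul]
    ring_nf
  have hfinal : (1 + e) ^ n + (1 - e) ^ n
      = 2 ^ n * Complex.exp (-Complex.I * n * t / 2) *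
        ((Real.cos (t / 2) : ℂ) ^ n + (Complex.I * (Real.sin (t / 2) : ℂ)) ^ n) := by
    rw [hplus, hminus]
    simp only [mul_pow]
    rw [hun]
    ring
  have hS : ∑ J ∈ Finset.univ.filter (fun J : Fin n → ZMod 2 => Even (wt J)),
      Complex.exp (-Complex.I * t * (wt J : ℂ))
      = ∑ J ∈ Finset.univ.filter (fun J : Fin n → ZMod 2 => Even (wt J)), e ^ wt J :=
    Finset.sum_congr rfl (fun J _ => hsummand J)
  rw [hS]
  have h2n : (2 : ℂ) ^ n = 2 * 2 ^ (n - 1) := by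
    obtain ⟨m, rfl⟩ : ∃ m, n = m + 1 := ⟨n - 1, by omega⟩
    rw [pow_succ]
    simp [mul_comm]
  have := hsplit
  rw [hfinal, h2n] at this
  have h2 : (2 : ℂ) ≠ 0 := two_ne_zero
  field_simp at this ⊢
  linear_combination this
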